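/- For Re(ν) > 0 and y > 0, ∫_{−∞}^{∞} (y/(x² + y²))^{1/2 + ν} e^{−2πix} dx = 2 π^{ν + 1/2} √y K_ν(2πy) / Γ(ν + 1/2), where K_ν is the modified Bessel function of the second kind. -/

import Mathlib

open MeasureTheory Real

/-- The modified Bessel function of the second kind,
`K_ν(z) = ∫_0^∞ e^{−z cosh t} cosh(νt) dt`. -/
noncomputable def besselK (ν : ℂ) (z : ℝ) : ℂ :=
  ∫ t in Set.Ioi (0 : ℝ), Complex.exp (-(z : ℂ) * Real.cosh t) * Complex.cosh (ν * t)

lemma cosh_quad (u : ℝ) : u ^ 2 / 8 ≤ Real.cosh u := by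
  have h := Real.add_one_le_exp (|u| / 2)
  have h2 : Real.exp (|u| / 2) ^ 2 = Real.exp |u| := by
    rw [sq, ← Real.exp_add]; ring_nf
  have h3 : Real.exp |u| ≤ 2 * Real.cosh u := by
    rcases abs_cases u with ⟨h4, _⟩ | ⟨h4, _⟩ <;>
      rw [h4] <;> rw [Real.cosh_eq] <;>
      nlinarith [Real.exp_pos u, Real.exp_pos (-u)]
  nlinarith [abs_nonneg u, sq_abs u, Real.exp_pos (|u| / 2)]

lemma integrable_exp_mul_sub_cosh (ν : ℂ) {c : ℝ} (hc : 0 < c) :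
    Integrable (fun u : ℝ => Complex.exp (ν * u - c * Real.cosh u)) := by
  set a : ℝ := |ν.re|
  have key : Integrable (fun u : ℝ =>
      Real.exp (a * u - c / 8 * u ^ 2) + Real.exp (-a * u - c / 8 * u ^ 2)) := by
    have hb : 0 < ((c / 8 : ℝ) : ℂ).re := by simpa using by linarith
    have h1 := (integrable_cexp_quadratic hb (a : ℂ) 0).norm
    have h2 := (integrable_cexp_quadratic hb (-a : ℂ) 0).norm
    have e1 : ∀ (t : ℝ) (u : ℝ),
        ‖Complex.exp (-((c / 8 : ℝ) : ℂ) * u ^ 2 + (t : ℂ) * u + 0)‖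
          = Real.exp (t * u - c / 8 * u ^ 2) := by
      intro t u
      rw [Complex.norm_exp]
      congr 1
      simp [Complex.add_re, Complex.mul_re, Complex.ofReal_re, Complex.ofReal_im,
        ← Complex.ofReal_pow]
      ring
    refine Integrable.add (h1.congr ?_) (h2.congr ?_)
    · filter_upwards with u; rw [e1]
    · filter_upwards with u
      have := e1 (-a) u
      rw [show ((-a : ℝ) : ℂ) = -(a:ℂ) by push_cast; ring] at this
      rw [this]
  refine key.mono' ?_ ?_
  · exact (Complex.continuous_exp.comp (by fun_prop)).aestronglyMeasurable
  · filter_upwards with u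
    rw [Complex.norm_exp]
    have hre : (ν * u - (c : ℂ) * Real.cosh u).re = ν.re * u - c * Real.cosh u := by
      simp [Complex.sub_re, Complex.mul_re]
    rw [hre]
    have hcosh := cosh_quad u
    rcases le_or_gt 0 u with h | h
    · have : Real.exp (ν.re * u - c * Real.cosh u) ≤ Real.exp (a * u - c / 8 * u ^ 2) := by
        apply Real.exp_le_exp.2
        have : ν.re * u ≤ a * u := by
          apply mul_le_mul_of_nonneg_right (le_abs_self _) h
        nlinarith
      linarith [Real.exp_pos (-a * u - c / 8 * u ^ 2)]
    · have : Real.exp (ν.re * u - c * Real.cosh u) ≤ Real.exp (-a * u - c / 8 * u ^ 2) := by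
        apply Real.exp_le_exp.2
        have : ν.re * u ≤ -a * u := by
          nlinarith [neg_abs_le ν.re]
        nlinarith
      linarith [Real.exp_pos (a * u - c / 8 * u ^ 2)]

lemma integral_exp_sub_cosh (ν : ℂ) {c : ℝ} (hc : 0 < c) :
    ∫ u : ℝ, Complex.exp (ν * u - c * Real.cosh u) = 2 * besselK ν c := by
  set f : ℝ → ℂ := fun u => Complex.exp (ν * u - c * Real.cosh u) with hf
  have hint := integrable_exp_mul_sub_cosh ν hc
  have h1 : (∫ u in Set.Iic (0:ℝ), f u) + (∫ u in Set.Ioi (0:ℝ), f u) = ∫ u, f u :=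
    intervalIntegral.integral_Iic_add_Ioi hint.integrableOn hint.integrableOn
  have h2 : (∫ u in Set.Iic (0:ℝ), f u) = ∫ u in Set.Ioi (0:ℝ), f (-u) := by
    have := integral_comp_neg_Iic (0:ℝ) (fun u => f (-u))
    simp only [neg_neg, neg_zero] at this
    exact this
  have h3 : (∫ u in Set.Ioi (0:ℝ), f (-u)) + (∫ u in Set.Ioi (0:ℝ), f u)
      = ∫ u in Set.Ioi (0:ℝ), (f (-u) + f u) := by
    rw [integral_add hint.comp_neg.integrableOn hint.integrableOn]
  have h4 : ∀ u : ℝ, f (-u) + f u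
      = 2 * (Complex.exp (-(c : ℂ) * Real.cosh u) * Complex.cosh (ν * u)) := by
    intro u
    simp only [hf, Complex.ofReal_neg, Real.cosh_neg]
    rw [show ν * -(u:ℂ) - (c:ℂ) * (Real.cosh u : ℂ)
        = -(ν * u) + -(c:ℂ) * (Real.cosh u : ℂ) by ring,
      show ν * (u:ℂ) - (c:ℂ) * (Real.cosh u : ℂ)
        = (ν * u) + -(c:ℂ) * (Real.cosh u : ℂ) by ring,
      Complex.exp_add, Complex.exp_add]
    have h5 := Complex.two_cosh (x := ν * u)
    linear_combination -Complex.exp (-(c:ℂ) * (Real.cosh u : ℂ)) * h5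
  rw [← h1, h2, h3]
  simp_rw [h4]
  rw [integral_const_mul]
  rfl

lemma subst_lemma (ν : ℂ) {y : ℝ} (hy : 0 < y) :
    (∫ t in Set.Ioi (0:ℝ), (t:ℂ) ^ (ν - 1) * Complex.exp ((-(y^2*t) - π^2/t : ℝ) : ℂ))
      = ((π/y : ℝ) : ℂ) ^ ν * ∫ u : ℝ, Complex.exp (ν * u - (2*π*y) * Real.cosh u) := by
  set c : ℝ := π / y with hc
  have hc0 : 0 < c := div_pos Real.pi_pos hy
  set G : ℝ → ℂ := fun t => (t:ℂ) ^ (ν - 1) * Complex.exp ((-(y^2*t) - π^2/t : ℝ) : ℂ) with hG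
  have himg : (fun u : ℝ => c * Real.exp u) '' Set.univ = Set.Ioi 0 := by
    rw [Set.image_univ]
    ext x
    constructor
    · rintro ⟨u, rfl⟩
      exact mul_pos hc0 (Real.exp_pos u)
    · intro hx
      refine ⟨Real.log (x / c), ?_⟩
      show c * Real.exp (Real.log (x / c)) = x
      rw [Real.exp_log (div_pos hx hc0)]
      field_simp
  have hderiv : ∀ u ∈ Set.univ, HasDerivWithinAt (fun u : ℝ => c * Real.exp u)
      (c * Real.exp u) Set.univ u := fun u _ =>
    ((Real.hasDerivAt_exp u).const_mul c).hasDerivWithinAt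
  have hinj : Set.InjOn (fun u : ℝ => c * Real.exp u) Set.univ := by
    intro u _ v _ h
    have h2 : Real.exp u = Real.exp v := mul_left_cancel₀ hc0.ne' h
    exact Real.exp_injective h2
  have key := integral_image_eq_integral_abs_deriv_smul MeasurableSet.univ hderiv hinj G
  rw [himg, Measure.restrict_univ] at key
  rw [key]
  rw [← integral_const_mul]
  congr 1 with u
  have hceu : (0:ℝ) < c * Real.exp u := mul_pos hc0 (Real.exp_pos u)
  rw [abs_of_pos hceu, Complex.real_smul]
  have h1 : ((c * Real.exp u : ℝ) : ℂ) ^ (ν - 1)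
      = (c : ℂ) ^ (ν - 1) * Complex.exp ((ν - 1) * u) := by
    rw [Complex.ofReal_mul, Complex.mul_cpow_ofReal_nonneg hc0.le (Real.exp_pos u).le]
    congr 1
    rw [Complex.ofReal_exp,
      Complex.cpow_def_of_ne_zero (Complex.exp_ne_zero _),
      Complex.log_exp (by simpa using Real.pi_pos) (by simpa using Real.pi_pos.le),
      mul_comm]
  have h2 : (-(y^2*(c*Real.exp u)) - π^2/(c*Real.exp u) : ℝ)
      = -(2*π*y*Real.cosh u) := by
    rw [hc, Real.cosh_eq, Real.exp_neg]
    have h3 := Real.exp_pos u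
    field_simp
    ring
  show ((c * Real.exp u : ℝ) : ℂ) * (((c * Real.exp u : ℝ) : ℂ) ^ (ν - 1) *
      Complex.exp ((-(y^2*(c*Real.exp u)) - π^2/(c*Real.exp u) : ℝ) : ℂ))
    = (c : ℂ) ^ ν * Complex.exp (ν * u - 2*(π:ℂ)*y * Real.cosh u)
  rw [h1, h2]
  have hcne : (c : ℂ) ≠ 0 := by exact_mod_cast hc0.ne'
  have hcpow : (c : ℂ) ^ ν = (c : ℂ) * (c : ℂ) ^ (ν - 1) := by
    nth_rewrite 1 [show ν = 1 + (ν - 1) by ring]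
    rw [Complex.cpow_add _ _ hcne, Complex.cpow_one]
  have e2 : Complex.exp (u:ℂ) * Complex.exp ((ν-1)*(u:ℂ)) *
      Complex.exp (((-(2*π*y*Real.cosh u) : ℝ)) : ℂ)
      = Complex.exp (ν * u - 2*(π:ℂ)*y * Real.cosh u) := by
    rw [← Complex.exp_add, ← Complex.exp_add]
    congr 1
    push_cast
    ring
  rw [hcpow, ← e2, Complex.ofReal_mul, Complex.ofReal_exp]
  ring

/-- For `Re ν > 0` and `y > 0`,
`∫_ℝ (y/(x²+y²))^{1/2+ν} e^{−2πix} dx = 2 π^{ν+1/2} √y K_ν(2πy) / Γ(ν+1/2)`. -/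
theorem jacquet_integral_sl2 (ν : ℂ) (hν : 0 < ν.re) (y : ℝ) (hy : 0 < y) :
    (∫ x : ℝ, ((y / (x ^ 2 + y ^ 2) : ℝ) : ℂ) ^ ((1 / 2 : ℂ) + ν) *
        Complex.exp (-(2 * (π : ℂ) * Complex.I * (x : ℂ))))
      = 2 * (π : ℂ) ^ (ν + 1 / 2) * (Real.sqrt y : ℂ) * besselK ν (2 * π * y) /
          Complex.Gamma (ν + 1 / 2) := by
  set s : ℂ := (1/2 : ℂ) + ν with hs
  have hsre : 0 < s.re := by
    rw [hs]
    simp only [Complex.add_re]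
    norm_num
    linarith
  have hΓ : Complex.Gamma s ≠ 0 := by
    apply Complex.Gamma_ne_zero
    intro m hm
    rw [hm] at hsre
    simp only [Complex.neg_re, Complex.natCast_re] at hsre
    have : (0:ℝ) ≤ m := Nat.cast_nonneg m
    linarith
  set F : ℝ → ℝ → ℂ := fun t x => (t:ℂ) ^ (s-1) *
    Complex.exp (-(t:ℂ) * x^2 + (-(2*π*Complex.I))*x + (-((t:ℂ)*y^2))) with hF
  -- Claim A: pointwise Gamma representation
  have claimA : ∀ x : ℝ, ((y / (x ^ 2 + y ^ 2) : ℝ) : ℂ) ^ ((1 / 2 : ℂ) + ν) *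
      Complex.exp (-(2 * (π : ℂ) * Complex.I * (x : ℂ)))
      = (y:ℂ)^s / Complex.Gamma s * ∫ t in Set.Ioi (0:ℝ), F t x := by
    intro x
    have hr : (0:ℝ) < x^2 + y^2 := by positivity
    have hgamma := Complex.integral_cpow_mul_exp_neg_mul_Ioi (a := s) hsre hr
    have hIF : (∫ t in Set.Ioi (0:ℝ), F t x)
        = (∫ t in Set.Ioi (0:ℝ), (t:ℂ)^(s-1) *
            Complex.exp (-(((x^2+y^2 : ℝ)):ℂ) * t)) *
          Complex.exp (-(2 * (π : ℂ) * Complex.I * (x : ℂ))) := by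
      rw [← integral_mul_const]
      apply setIntegral_congr_fun measurableSet_Ioi
      intro t ht
      rw [hF]
      simp only
      conv_rhs => rw [mul_assoc, ← Complex.exp_add]
      congr 2
      push_cast
      ring
    have hgamma' : (∫ t in Set.Ioi (0:ℝ), (t:ℂ)^(s-1) *
        Complex.exp (-(((x^2+y^2 : ℝ)):ℂ) * t))
        = (1/((x^2+y^2 : ℝ)):ℂ) ^ s * Complex.Gamma s := by
      rw [← hgamma]
      apply setIntegral_congr_fun measurableSet_Ioi
      intro t ht
      congr 2
      push_cast
      ring
    rw [hIF, hgamma']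
    have hbase : ((y / (x ^ 2 + y ^ 2) : ℝ) : ℂ) ^ ((1 / 2 : ℂ) + ν)
        = (y:ℂ)^s * (1/((x^2+y^2 : ℝ)):ℂ) ^ s := by
      rw [show (y / (x ^ 2 + y ^ 2) : ℝ) = y * (1/(x^2+y^2)) by ring,
        Complex.ofReal_mul,
        Complex.mul_cpow_ofReal_nonneg hy.le (by positivity), ← hs]
      congr 2
      push_cast
      ring
    rw [hbase]
    field_simp
  -- Fubini integrability
  have hFmeas : AEStronglyMeasurable (Function.uncurry F)
      ((volume.restrict (Set.Ioi 0)).prod volume) := by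
    have hprod : (volume.restrict (Set.Ioi (0:ℝ))).prod (volume : Measure ℝ)
        = ((volume : Measure ℝ).prod (volume : Measure ℝ)).restrict
            ((Set.Ioi 0) ×ˢ Set.univ) := by
      rw [← Measure.prod_restrict, Measure.restrict_univ]
    rw [hprod]
    apply ContinuousOn.aestronglyMeasurable
    · apply ContinuousOn.mul
      · intro p hp
        have hcont := Complex.continuousAt_ofReal_cpow_const p.1 (s-1)
          (Or.inr (ne_of_gt hp.1))
        exact (hcont.comp continuous_fst.continuousAt).continuousWithinAt
      · exact (Complex.continuous_exp.comp (by fun_prop)).continuousOn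
    · exact measurableSet_Ioi.prod MeasurableSet.univ
  have hFint : Integrable (Function.uncurry F)
      ((volume.restrict (Set.Ioi 0)).prod volume) := by
    rw [integrable_prod_iff hFmeas]
    constructor
    · filter_upwards [ae_restrict_mem measurableSet_Ioi] with t ht
      have ht' : 0 < ((t:ℝ):ℂ).re := by simpa using ht
      have := (integrable_cexp_quadratic ht' (-(2*π*Complex.I))
        (-((t:ℂ)*y^2))).const_mul ((t:ℂ) ^ (s-1))
      exact this
    · set σ : ℝ := (s-1).re with hσ
      have hσν : σ = ν.re - 1/2 := by
        rw [hσ, hs]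
        simp [Complex.sub_re, Complex.add_re]
        ring
      have heq : ∀ t ∈ Set.Ioi (0:ℝ), (∫ x : ℝ, ‖F t x‖)
          = Real.sqrt π * (t ^ (σ - 1/2) * Real.exp (-(y^2) * t)) := by
        intro t ht
        have ht' : (0:ℝ) < t := ht
        have hnorm : ∀ x : ℝ, ‖F t x‖
            = t ^ σ * (Real.exp (-(y^2)*t) * Real.exp (-t * x^2)) := by
          intro x
          rw [hF]
          simp only
          rw [norm_mul,
            Complex.norm_cpow_eq_rpow_re_of_pos ht', Complex.norm_exp]
          rw [← Real.exp_add]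
          congr 1
          simp [Complex.add_re, Complex.mul_re, Complex.I_re, Complex.I_im,
            ← Complex.ofReal_pow]
          ring
        simp_rw [hnorm]
        rw [integral_const_mul, integral_const_mul, integral_gaussian]
        rw [Real.sqrt_div Real.pi_pos.le, Real.sqrt_eq_rpow t,
          show σ - 1/2 = σ + (-(1/2)) by ring, Real.rpow_add ht',
          Real.rpow_neg ht'.le]
        ring
      have hbase : IntegrableOn
          (fun t : ℝ => Real.sqrt π * (t ^ (σ - 1/2) * Real.exp (-(y^2) * t)))
          (Set.Ioi (0:ℝ)) := by
        have h0 : IntegrableOn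
            (fun t : ℝ => t ^ (σ - 1/2) * Real.exp (-(y^2) * t ^ (1:ℝ)))
            (Set.Ioi (0:ℝ)) :=
          integrableOn_rpow_mul_exp_neg_mul_rpow
            (by rw [hσν]; linarith) one_pos (by positivity)
        have h1 : IntegrableOn
            (fun t : ℝ => t ^ (σ - 1/2) * Real.exp (-(y^2) * t))
            (Set.Ioi (0:ℝ)) := by
          apply h0.congr_fun ?_ measurableSet_Ioi
          intro t ht
          simp [Real.rpow_one]
        exact h1.const_mul _
      apply hbase.congr
      filter_upwards [ae_restrict_mem measurableSet_Ioi] with t ht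
      exact (heq t ht).symm
  -- Claim B: inner Gaussian integral
  have claimB : ∀ t ∈ Set.Ioi (0:ℝ), (∫ x : ℝ, F t x)
      = (π:ℂ)^(1/2:ℂ) * ((t:ℂ)^(ν-1) * Complex.exp ((-(y^2*t) - π^2/t : ℝ) : ℂ)) := by
    intro t ht
    have ht' : (0:ℝ) < t := ht
    have htne : (t:ℂ) ≠ 0 := by exact_mod_cast ht'.ne'
    have hfour := fourierIntegral_gaussian (b := (t:ℂ)) (by simpa using ht') (-2*π : ℂ)
    have hsplit1 : ∀ x : ℝ, F t x = ((t:ℂ)^(s-1) * Complex.exp (-((t:ℂ)*y^2))) *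
        (Complex.exp (Complex.I * (-2*π : ℂ) * x) * Complex.exp (-(t:ℂ) * x^2)) := by
      intro x
      rw [hF]
      simp only
      conv_rhs => rw [mul_mul_mul_comm, ← Complex.exp_add, mul_assoc, ← Complex.exp_add]
      congr 2
      push_cast
      ring
    rw [integral_congr_ae (ae_of_all _ hsplit1), integral_const_mul, hfour]
    have harg : ((t:ℝ):ℂ).arg ≠ π := by
      rw [Complex.arg_ofReal_of_nonneg ht'.le]
      exact Real.pi_ne_zero.symm
    have hsplit : (t:ℂ)^(s-1) * ((π:ℂ)/t)^(1/2:ℂ)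
        = (π:ℂ)^(1/2:ℂ) * (t:ℂ)^(ν-1) := by
      have h12 : ((π:ℂ)/t)^(1/2:ℂ)
          = (π:ℂ)^(1/2:ℂ) * ((t:ℂ)^(1/2:ℂ))⁻¹ := by
        rw [div_eq_mul_inv, show ((t:ℝ):ℂ)⁻¹ = (((t⁻¹ : ℝ)):ℂ) by push_cast; ring,
          Complex.mul_cpow_ofReal_nonneg Real.pi_pos.le (by positivity),
          show (((t⁻¹ : ℝ)):ℂ) = ((t:ℝ):ℂ)⁻¹ by push_cast; ring,
          Complex.inv_cpow _ _ harg]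
      rw [h12]
      have h13 : (t:ℂ)^(s-1) * ((t:ℂ)^(1/2:ℂ))⁻¹ = (t:ℂ)^(ν-1) := by
        rw [← Complex.cpow_neg, ← Complex.cpow_add _ _ htne]
        congr 1
        rw [hs]
        ring
      rw [← h13]
      ring
    have hexp : Complex.exp (-((t:ℂ)*y^2)) * Complex.exp (-(-2*π:ℂ)^2/(4*(t:ℂ)))
        = Complex.exp ((-(y^2*t) - π^2/t : ℝ) : ℂ) := by
      rw [← Complex.exp_add]
      congr 1
      push_cast
      field_simp
      ring
    calc (t:ℂ)^(s-1) * Complex.exp (-((t:ℂ)*y^2)) *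
          (((π:ℂ)/t)^(1/2:ℂ) * Complex.exp (-(-2*π:ℂ)^2/(4*(t:ℂ))))
        = ((t:ℂ)^(s-1) * ((π:ℂ)/t)^(1/2:ℂ)) *
          (Complex.exp (-((t:ℂ)*y^2)) * Complex.exp (-(-2*π:ℂ)^2/(4*(t:ℂ)))) := by
          ring
      _ = (π:ℂ)^(1/2:ℂ) * ((t:ℂ)^(ν-1) * Complex.exp ((-(y^2*t) - π^2/t : ℝ) : ℂ)) := by
          rw [hsplit, hexp]; ring
  -- Assembly
  rw [integral_congr_ae (ae_of_all _ claimA), integral_const_mul,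
    ← integral_integral_swap hFint,
    setIntegral_congr_fun measurableSet_Ioi claimB, integral_const_mul,
    subst_lemma ν hy]
  have hconv : (∫ u : ℝ, Complex.exp (ν * u - 2*(π:ℂ)*(y:ℂ) * Real.cosh u))
      = 2 * besselK ν (2*π*y) := by
    rw [← integral_exp_sub_cosh ν (show (0:ℝ) < 2*π*y by positivity)]
    congr 1 with u
    congr 1
    push_cast
    ring
  rw [hconv]
  -- final algebra
  have hyne : ((y:ℝ):ℂ) ≠ 0 := by exact_mod_cast hy.ne'
  have hπne : ((π:ℝ):ℂ) ≠ 0 := by exact_mod_cast Real.pi_ne_zero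
  have hargy : ((y:ℝ):ℂ).arg ≠ π := by
    rw [Complex.arg_ofReal_of_nonneg hy.le]
    exact Real.pi_ne_zero.symm
  have h5 : ((π/y:ℝ):ℂ)^ν = ((π:ℝ):ℂ)^ν * ((y:ℝ):ℂ)^(-ν) := by
    rw [show (π/y:ℝ) = π * (1/y) by ring, Complex.ofReal_mul,
      Complex.mul_cpow_ofReal_nonneg Real.pi_pos.le (by positivity)]
    congr 1
    rw [show ((1/y:ℝ):ℂ) = ((y:ℝ):ℂ)⁻¹ by push_cast; ring,
      Complex.inv_cpow _ _ hargy, ← Complex.cpow_neg]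
  have h6 : ((y:ℝ):ℂ)^s * ((y:ℝ):ℂ)^(-ν) = ((Real.sqrt y : ℝ):ℂ) := by
    rw [← Complex.cpow_add _ _ hyne, show s + -ν = ((1/2:ℝ):ℂ) by rw [hs]; push_cast; ring,
      ← Complex.ofReal_cpow hy.le, Real.sqrt_eq_rpow]
  have h7 : ((π:ℝ):ℂ)^(1/2:ℂ) * ((π:ℝ):ℂ)^ν = ((π:ℝ):ℂ)^(ν + 1/2) := by
    rw [← Complex.cpow_add _ _ hπne]
    ring_nf
  have hΓeq : Complex.Gamma (ν + 1/2) = Complex.Gamma s := by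
    rw [hs, add_comm]
  rw [hΓeq, h5, div_mul_eq_mul_div, eq_div_iff hΓ, div_mul_eq_mul_div,
    mul_div_assoc, div_self hΓ, mul_one, ← h7, ← h6]
  ring
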